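/- Let S be a zerosumfree semiring. Then S is reversible if and only if the formal power series semiring S[[X]] is reversible. -/

import Mathlib

lemma zsf_sum_eq_zero {S : Type*} [Semiring S]
    (hzsf : ∀ s t : S, s + t = 0 → s = 0 ∧ t = 0)
    {ι : Type*} [DecidableEq ι] (s : Finset ι) (f : ι → S) (h : ∑ i ∈ s, f i = 0) :
    ∀ i ∈ s, f i = 0 := by
  intro i hi
  rw [← Finset.add_sum_erase s f hi] at h
  exact (hzsf _ _ h).1

/-- A zerosumfree semiring `S` is reversible if and only if the formal
power series semiring `S[[X]]` is reversible. -/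
theorem zerosumfree_reversible_iff_powerSeries_reversible
    {S : Type*} [Semiring S] [Nontrivial S]
    (hzsf : ∀ s t : S, s + t = 0 → s = 0 ∧ t = 0) :
    (∀ a b : S, a * b = 0 → b * a = 0) ↔
      (∀ f g : PowerSeries S, f * g = 0 → g * f = 0) := by
  constructor
  · intro hrev f g hfg
    ext n
    rw [PowerSeries.coeff_mul, map_zero]
    apply Finset.sum_eq_zero
    intro p hp
    apply hrev
    have h0 : (PowerSeries.coeff n) (f * g) = 0 := by rw [hfg, map_zero]
    rw [PowerSeries.coeff_mul] at h0
    have := zsf_sum_eq_zero hzsf _ _ h0 (p.2, p.1) ?_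
    · exact this
    · rw [Finset.HasAntidiagonal.mem_antidiagonal] at hp ⊢
      omega
  · intro hrev a b hab
    have : (PowerSeries.C (R := S) a) * (PowerSeries.C (R := S) b) = 0 := by
      rw [← map_mul, hab, map_zero]
    have h2 := hrev _ _ this
    rw [← map_mul] at h2
    have := congrArg (PowerSeries.constantCoeff (R := S)) h2
    simpa using this
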